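/- arXiv:2601.02541 — 2 statements merged into one kernel-verified Lean document; each statement's English description precedes it below -/
import Mathlib

section
/- Let Γ be a group of measure-preserving Lipschitz transformations of a metric measure space (X, d, μ) with μ(X) < ∞, equipped with ρ: Γ → [0,∞) satisfying ρ(γγ') ≤ ρ(γ) + ρ(γ') + C_ρ with finite sublevel sets. Define ᾱ(x,y) = sup{α : H_{x,y,α} is infinite}, where H_{x,y,α} = {γ : d(γx, y) ≤ e^{−αρ(γ)}}. Then ᾱ is invariant under the diagonal-type action (γ₁, γ₂)·(x, y) = (γ₁·x, γ₂·y) of Γ × Γ on X × X. -/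
open MeasureTheory

/-- Key transfer: if H_{x,y,α} is infinite then H_{γ₁x,γ₂y,α'} is infinite for α' < α. -/
lemma stmt10_key {Γ X : Type*} [Group Γ] [MetricSpace X] [MulAction Γ X]
    (hlip : ∀ γ : Γ, ∃ K : NNReal, LipschitzWith K (fun x : X => γ • x))
    (ρ : Γ → ℝ) (Cρ : ℝ) (hρ0 : ∀ γ, 0 ≤ ρ γ)
    (hsub : ∀ γ γ' : Γ, ρ (γ * γ') ≤ ρ γ + ρ γ' + Cρ)
    (hfin : ∀ t : ℝ, {γ : Γ | ρ γ ≤ t}.Finite)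
    (γ₁ γ₂ : Γ) (x y : X) (α α' : ℝ) (hαα : α' < α)
    (hH : {γ : Γ | dist (γ • x) y ≤ Real.exp (-α * ρ γ)}.Infinite) :
    {γ : Γ | dist (γ • (γ₁ • x)) (γ₂ • y) ≤ Real.exp (-α' * ρ γ)}.Infinite := by
  obtain ⟨K₂, hK₂⟩ := hlip γ₂
  set K : ℝ := max (K₂ : ℝ) 1 with hKdef
  have hK1 : (1:ℝ) ≤ K := le_max_right _ _
  have hKpos : (0:ℝ) < K := lt_of_lt_of_le one_pos hK1
  set C : ℝ := ρ γ₂ + ρ γ₁⁻¹ + 2*Cρ with hCdef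
  set C' : ℝ := ρ γ₂⁻¹ + ρ γ₁ + 2*Cρ with hC'def
  set M : ℝ := max (max C C') 0 with hMdef
  have hM0 : 0 ≤ M := le_max_right _ _
  set T : ℝ := (Real.log K + |α'| * M) / (α - α') with hTdef
  have hd : 0 < α - α' := sub_pos.mpr hαα
  set S : Set Γ := {γ : Γ | dist (γ • x) y ≤ Real.exp (-α * ρ γ)} \ {γ : Γ | ρ γ ≤ T}
    with hSdef
  have hSinf : S.Infinite := hH.diff (hfin T)
  have hinj : Function.Injective (fun γ : Γ => γ₂ * γ * γ₁⁻¹) := by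
    intro a b hab
    simpa using hab
  have himg : (fun γ : Γ => γ₂ * γ * γ₁⁻¹) '' S ⊆
      {γ : Γ | dist (γ • (γ₁ • x)) (γ₂ • y) ≤ Real.exp (-α' * ρ γ)} := by
    rintro _ ⟨γ, ⟨hdist, hT⟩, rfl⟩
    simp only [Set.mem_setOf_eq, not_le] at hdist hT ⊢
    set δ : Γ := γ₂ * γ * γ₁⁻¹ with hδdef
    have hsm : δ • (γ₁ • x) = γ₂ • (γ • x) := by
      rw [smul_smul, smul_smul, hδdef]
      congr 1
      group
    -- distance bound
    have h1 : dist (δ • (γ₁ • x)) (γ₂ • y) ≤ K * Real.exp (-α * ρ γ) := by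
      rw [hsm]
      calc dist (γ₂ • (γ • x)) (γ₂ • y) ≤ (K₂ : ℝ) * dist (γ • x) y := hK₂.dist_le_mul _ _
        _ ≤ K * Real.exp (-α * ρ γ) := by
            apply mul_le_mul (le_max_left _ _) hdist dist_nonneg (le_of_lt hKpos)
    -- ρ bounds
    have hρδ1 : ρ δ ≤ ρ γ + C := by
      have a1 : ρ δ ≤ ρ γ₂ + ρ (γ * γ₁⁻¹) + Cρ := by
        have := hsub γ₂ (γ * γ₁⁻¹)
        simpa [hδdef, mul_assoc] using this
      have a2 : ρ (γ * γ₁⁻¹) ≤ ρ γ + ρ γ₁⁻¹ + Cρ := hsub γ γ₁⁻¹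
      rw [hCdef]; linarith
    have hρδ2 : ρ γ - C' ≤ ρ δ := by
      have hγeq : γ = γ₂⁻¹ * (δ * γ₁) := by rw [hδdef]; group
      have a1 : ρ γ ≤ ρ γ₂⁻¹ + ρ (δ * γ₁) + Cρ := by
        conv_lhs => rw [hγeq]
        exact hsub _ _
      have a2 : ρ (δ * γ₁) ≤ ρ δ + ρ γ₁ + Cρ := hsub δ γ₁
      rw [hC'def]; linarith
    have habs : |ρ δ - ρ γ| ≤ M := by
      rw [abs_le]
      constructor
      · have : C' ≤ M := le_trans (le_max_right _ _) (le_max_left _ _)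
        linarith
      · have : C ≤ M := le_trans (le_max_left _ _) (le_max_left _ _)
        linarith
    -- exponent comparison
    have h2 : Real.log K + (-α * ρ γ) ≤ -α' * ρ δ := by
      have hTγ : Real.log K + |α'| * M < (α - α') * ρ γ := by
        have := (div_lt_iff₀ hd).mp hT
        linarith [this]
      have h3 : -α' * (ρ δ - ρ γ) ≥ -(|α'| * M) := by
        have := abs_le.mp (abs_le.mpr ⟨(abs_le.mp habs).1, (abs_le.mp habs).2⟩)
        have hb : |(-α') * (ρ δ - ρ γ)| ≤ |α'| * M := by
          rw [abs_mul, abs_neg]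
          exact mul_le_mul_of_nonneg_left habs (abs_nonneg _)
        linarith [(abs_le.mp hb).1]
      have : -α' * ρ δ = -α' * ρ γ + (-α') * (ρ δ - ρ γ) := by ring
      rw [this]
      nlinarith
    calc dist (δ • (γ₁ • x)) (γ₂ • y) ≤ K * Real.exp (-α * ρ γ) := h1
      _ = Real.exp (Real.log K + (-α * ρ γ)) := by
          rw [Real.exp_add, Real.exp_log hKpos]
      _ ≤ Real.exp (-α' * ρ δ) := Real.exp_le_exp.mpr h2
  exact ((hSinf.image (hinj.injOn)).mono himg)

/-- One-sided inequality for the sup. -/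
lemma stmt10_le {Γ X : Type*} [Group Γ] [MetricSpace X] [MulAction Γ X]
    (hlip : ∀ γ : Γ, ∃ K : NNReal, LipschitzWith K (fun x : X => γ • x))
    (ρ : Γ → ℝ) (Cρ : ℝ) (hρ0 : ∀ γ, 0 ≤ ρ γ)
    (hsub : ∀ γ γ' : Γ, ρ (γ * γ') ≤ ρ γ + ρ γ' + Cρ)
    (hfin : ∀ t : ℝ, {γ : Γ | ρ γ ≤ t}.Finite)
    (γ₁ γ₂ : Γ) (x y : X) :
    sSup {a : EReal | ∃ α : ℝ, a = (α : EReal) ∧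
        {γ : Γ | dist (γ • x) y ≤ Real.exp (-α * ρ γ)}.Infinite} ≤
    sSup {a : EReal | ∃ α : ℝ, a = (α : EReal) ∧
        {γ : Γ | dist (γ • (γ₁ • x)) (γ₂ • y) ≤ Real.exp (-α * ρ γ)}.Infinite} := by
  apply sSup_le
  rintro _ ⟨α, rfl, hinf⟩
  apply le_of_forall_lt_imp_le_of_dense
  intro c hc
  induction c using EReal.rec with
  | bot => exact bot_le
  | coe β =>
    have hβα : β < α := by exact_mod_cast hc
    exact le_sSup ⟨β, rfl, stmt10_key hlip ρ Cρ hρ0 hsub hfin γ₁ γ₂ x y α β hβα hinf⟩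
  | top => exact absurd hc (by simp)

/-- the Diophantine exponent ᾱ(x,y) = sup{α : H_{x,y,α} infinite}
is invariant under the Γ × Γ action (γ₁,γ₂)·(x,y) = (γ₁x, γ₂y). -/
theorem stmt10 {Γ X : Type*} [Group Γ] [MetricSpace X] [MeasurableSpace X]
    [MulAction Γ X]
    (μ : Measure X) [IsFiniteMeasure μ]
    (hmp : ∀ γ : Γ, MeasurePreserving (fun x => γ • x) μ μ)
    (hlip : ∀ γ : Γ, ∃ K : NNReal, LipschitzWith K (fun x : X => γ • x))
    (ρ : Γ → ℝ) (Cρ : ℝ) (hρ0 : ∀ γ, 0 ≤ ρ γ)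
    (hsub : ∀ γ γ' : Γ, ρ (γ * γ') ≤ ρ γ + ρ γ' + Cρ)
    (hfin : ∀ t : ℝ, {γ : Γ | ρ γ ≤ t}.Finite)
    (abar : X → X → EReal)
    (habar : ∀ x y : X, abar x y =
      sSup {a : EReal | ∃ α : ℝ, a = (α : EReal) ∧
        {γ : Γ | dist (γ • x) y ≤ Real.exp (-α * ρ γ)}.Infinite})
    (γ₁ γ₂ : Γ) (x y : X) :
    abar (γ₁ • x) (γ₂ • y) = abar x y := by
  rw [habar, habar]
  apply le_antisymm
  · have h := stmt10_le hlip ρ Cρ hρ0 hsub hfin γ₁⁻¹ γ₂⁻¹ (γ₁ • x) (γ₂ • y)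
    simpa [inv_smul_smul] using h
  · exact stmt10_le hlip ρ Cρ hρ0 hsub hfin γ₁ γ₂ x y
end

section
/- With notation as in the preceding context, the induced map Φ: (SL₂(ℝ) × Ẋ)/Γ → (marked 1-forms)/Diff⁺ is injective: if (g·ω, x₁,…,x_{d−1}, x)·φ = (h·ω, x₁,…,x_{d−1}, y) for some orientation-preserving diffeomorphism φ, then g⁻¹h ∈ Γ and (g, x)·(g⁻¹h) = (h, y). -/
/-- injectivity of the induced map Φ : (SL₂(ℝ) × Ẋ)/Γ → (marked
1-forms)/Diff⁺: if (g·ω, marks, x)·φ = (h·ω, marks, y) then g⁻¹h ∈ Γ and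
(g,x)·(g⁻¹h) = (h,y).  Abstract setting as in Statement 14, with Γ the image of
the differential on affine maps fixing the marked zeros. -/
theorem stmt15 {G D X Ω : Type*} [Group G] [Group D] [MulAction G Ω] [MulAction D X]
    (R : Ω → D → Ω)
    (hRmul : ∀ (η : Ω) (φ ψ : D), R η (φ * ψ) = R (R η φ) ψ)
    (hcomm : ∀ (g : G) (η : Ω) (φ : D), R (g • η) φ = g • R η φ)
    (Γ : Subgroup G) (σ : Γ →* D)
    (ω : Ω) (k : ℕ) (marks : Fin k → X)
    (hfree : ∀ a b : G, a • ω = b • ω → a = b)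
    (hΓ : ∀ a : G, a ∈ Γ ↔ ∃ φ : D, R ω φ = a • ω ∧ ∀ i, φ⁻¹ • marks i = marks i)
    (hσ : ∀ γ : Γ, R ω (σ γ) = (γ : G) • ω ∧ ∀ i, (σ γ)⁻¹ • marks i = marks i)
    (huniq : ∀ φ ψ : D, R ω φ = R ω ψ → (∀ i, φ⁻¹ • marks i = marks i) →
      (∀ i, ψ⁻¹ • marks i = marks i) → φ = ψ)
    (g h : G) (x y : X) (φ : D)
    (hpull : R (g • ω) φ = h • ω)
    (hmk : ∀ i, φ⁻¹ • marks i = marks i)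
    (hy : y = φ⁻¹ • x) :
    ∃ hm : g⁻¹ * h ∈ Γ,
      g * (g⁻¹ * h) = h ∧ (σ ⟨g⁻¹ * h, hm⟩)⁻¹ • x = y := by
  have hR : R ω φ = (g⁻¹ * h) • ω := by
    have := hcomm g ω φ
    rw [this] at hpull
    rw [mul_smul]
    exact (smul_left_cancel_iff g).mp (by simpa using hpull)
  have hm : g⁻¹ * h ∈ Γ := (hΓ _).mpr ⟨φ, hR, hmk⟩
  refine ⟨hm, by group, ?_⟩
  obtain ⟨h1, h2⟩ := hσ ⟨g⁻¹ * h, hm⟩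
  have : σ ⟨g⁻¹ * h, hm⟩ = φ := huniq _ _ (by rw [h1, hR]) h2 hmk
  rw [this, hy]
end
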